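/- Ground-state transformation identity: Let G = (V, E) be a finite weighted graph with symmetric weights w, let q : V → ℝ with q > 0, let W : V → ℝ, and suppose φ : V → ℝ satisfies (λ₀ − W(u)) q(u) φ(u) = Σ_{v} w(u,v)[φ(u) − φ(v)] for all u. Then for every g : V → ℝ, Σ_{{u,v}∈E} w(u,v)[g(u)φ(u) − g(v)φ(v)]² = Σ_u (λ₀ − W(u)) q(u) g(u)² φ(u)² + Σ_{{u,v}∈E} w(u,v)[g(u) − g(v)]² φ(u)φ(v). -/
import Mathlib


theorem statement3 {V : Type*} [Fintype V] (w : V → V → ℝ) (hw : ∀ u v, w u v = w v u)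
    (q : V → ℝ) (hq : ∀ u, 0 < q u) (W : V → ℝ) (lam0 : ℝ) (φ : V → ℝ)
    (heig : ∀ u, (lam0 - W u) * q u * φ u = ∑ v, w u v * (φ u - φ v))
    (g : V → ℝ) :
    (1/2) * ∑ u, ∑ v, w u v * (g u * φ u - g v * φ v)^2 =
      (∑ u, (lam0 - W u) * q u * g u ^2 * φ u ^2) +
        (1/2) * ∑ u, ∑ v, w u v * (g u - g v)^2 * (φ u * φ v) := by
  have key : ∀ u v, w u v * (g u * φ u - g v * φ v)^2 =
      w u v * (g u)^2 * φ u * (φ u - φ v) + w u v * (g v)^2 * φ v * (φ v - φ u)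
        + w u v * (g u - g v)^2 * (φ u * φ v) := by
    intro u v; ring
  have hA : ∀ u, ∑ v, w u v * (g u)^2 * φ u * (φ u - φ v)
      = (lam0 - W u) * q u * g u ^2 * φ u ^2 := by
    intro u
    have : ∑ v, w u v * (g u)^2 * φ u * (φ u - φ v)
        = (g u)^2 * φ u * ∑ v, w u v * (φ u - φ v) := by
      rw [Finset.mul_sum]; apply Finset.sum_congr rfl; intro v _; ring
    rw [this, ← heig u]; ring
  have hswap : ∑ u, ∑ v, w u v * (g v)^2 * φ v * (φ v - φ u)
      = ∑ u, ∑ v, w u v * (g u)^2 * φ u * (φ u - φ v) := by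
    rw [Finset.sum_comm]
    apply Finset.sum_congr rfl; intro u _
    apply Finset.sum_congr rfl; intro v _
    rw [hw u v]
  have expand : ∑ u, ∑ v, w u v * (g u * φ u - g v * φ v)^2
      = (∑ u, ∑ v, w u v * (g u)^2 * φ u * (φ u - φ v))
        + (∑ u, ∑ v, w u v * (g v)^2 * φ v * (φ v - φ u))
        + ∑ u, ∑ v, w u v * (g u - g v)^2 * (φ u * φ v) := by
    rw [← Finset.sum_add_distrib, ← Finset.sum_add_distrib]
    apply Finset.sum_congr rfl; intro u _
    rw [← Finset.sum_add_distrib, ← Finset.sum_add_distrib]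
    exact Finset.sum_congr rfl fun v _ => key u v
  rw [expand, hswap]
  have : ∑ u, ∑ v, w u v * (g u)^2 * φ u * (φ u - φ v)
      = ∑ u, (lam0 - W u) * q u * g u ^2 * φ u ^2 :=
    Finset.sum_congr rfl fun u _ => hA u
  rw [this]; ring
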